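/- Let n ≥ 1 and let p, q ∈ ℝ with −1/n < p ≤ q. Suppose the Borell–Brascamp–Lieb inequality holds with exponent p, i.e.: for every λ ∈ (0,1) and all Lebesgue integrable f, g, h : ℝⁿ → [0,∞) satisfying h((1−λ)y+λz) ≥ M_p(f(y), g(z); λ) for almost every (y,z) ∈ ℝⁿ×ℝⁿ, one has ∫h ≥ M_{p/(1+np)}(∫f, ∫g; λ). Then the Borell–Brascamp–Lieb inequality also holds with exponent q: for every λ ∈ (0,1) and all integrable f, g, h : ℝⁿ → [0,∞) satisfying h((1−λ)y+λz) ≥ M_q(f(y), g(z); λ) for almost every (y,z), one has ∫h ≥ M_{q/(1+nq)}(∫f, ∫g; λ). (Proposition A.1.) -/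

import Mathlib

open MeasureTheory

/-- The λ-weighted α-power mean of two nonnegative numbers. -/
noncomputable def powerMean (α lam a b : ℝ) : ℝ :=
  if 0 < a ∧ 0 < b then
    if α = 0 then a ^ (1 - lam) * b ^ lam
    else ((1 - lam) * a ^ α + lam * b ^ α) ^ (1 / α)
  else 0

/-- The Borell–Brascamp–Lieb inequality in ℝⁿ with exponent `p`. -/
def BBLHolds (n : ℕ) (p : ℝ) : Prop :=
  ∀ lam : ℝ, lam ∈ Set.Ioo (0 : ℝ) 1 →
    ∀ f g h : EuclideanSpace ℝ (Fin n) → ℝ,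
      (∀ x, 0 ≤ f x) → (∀ x, 0 ≤ g x) → (∀ x, 0 ≤ h x) →
      Integrable f → Integrable g → Integrable h →
      (∀ᵐ q ∂(volume : Measure (EuclideanSpace ℝ (Fin n) × EuclideanSpace ℝ (Fin n))),
        powerMean p lam (f q.1) (g q.2) ≤ h ((1 - lam) • q.1 + lam • q.2)) →
      powerMean (p / (1 + n * p)) lam (∫ x, f x) (∫ x, g x) ≤ ∫ x, h x

section Aux

open Real

/-- Two-term weighted Hölder inequality. -/
lemma holder2 {w₁ w₂ x₁ x₂ y₁ y₂ α β : ℝ} (hw₁ : 0 ≤ w₁) (hw₂ : 0 ≤ w₂)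
    (hx₁ : 0 ≤ x₁) (hx₂ : 0 ≤ x₂) (hy₁ : 0 ≤ y₁) (hy₂ : 0 ≤ y₂)
    (hα : 0 ≤ α) (hβ : 0 ≤ β) (hab : α + β = 1) :
    w₁ * (x₁ ^ α * y₁ ^ β) + w₂ * (x₂ ^ α * y₂ ^ β)
      ≤ (w₁ * x₁ + w₂ * x₂) ^ α * (w₁ * y₁ + w₂ * y₂) ^ β := by
  rcases eq_or_lt_of_le hα with hα0 | hα0
  · have hβ1 : β = 1 := by linarith
    simp [← hα0, hβ1, Real.rpow_zero, Real.rpow_one]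
  rcases eq_or_lt_of_le hβ with hβ0 | hβ0
  · have hα1 : α = 1 := by linarith
    simp [← hβ0, hα1, Real.rpow_zero, Real.rpow_one]
  set S := w₁ * x₁ + w₂ * x₂ with hS_def
  set T := w₁ * y₁ + w₂ * y₂ with hT_def
  have hS0 : 0 ≤ S := by positivity
  have hT0 : 0 ≤ T := by positivity
  rcases eq_or_lt_of_le hS0 with hS | hS
  · have h1 : w₁ * x₁ = 0 ∧ w₂ * x₂ = 0 := by
      constructor <;> nlinarith [mul_nonneg hw₁ hx₁, mul_nonneg hw₂ hx₂]
    have e1 : w₁ * (x₁ ^ α * y₁ ^ β) = 0 := by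
      rcases mul_eq_zero.mp h1.1 with h' | h'
      · rw [h', zero_mul]
      · rw [h', Real.zero_rpow hα0.ne', zero_mul, mul_zero]
    have e2 : w₂ * (x₂ ^ α * y₂ ^ β) = 0 := by
      rcases mul_eq_zero.mp h1.2 with h' | h'
      · rw [h', zero_mul]
      · rw [h', Real.zero_rpow hα0.ne', zero_mul, mul_zero]
    rw [e1, e2, add_zero]
    positivity
  rcases eq_or_lt_of_le hT0 with hT | hT
  · have h1 : w₁ * y₁ = 0 ∧ w₂ * y₂ = 0 := by
      constructor <;> nlinarith [mul_nonneg hw₁ hy₁, mul_nonneg hw₂ hy₂]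
    have e1 : w₁ * (x₁ ^ α * y₁ ^ β) = 0 := by
      rcases mul_eq_zero.mp h1.1 with h' | h'
      · rw [h', zero_mul]
      · rw [h', Real.zero_rpow hβ0.ne', mul_zero, mul_zero]
    have e2 : w₂ * (x₂ ^ α * y₂ ^ β) = 0 := by
      rcases mul_eq_zero.mp h1.2 with h' | h'
      · rw [h', zero_mul]
      · rw [h', Real.zero_rpow hβ0.ne', mul_zero, mul_zero]
    rw [e1, e2, add_zero]
    positivity
  have main : ∀ x y : ℝ, 0 ≤ x → 0 ≤ y →
      x ^ α * y ^ β ≤ S ^ α * T ^ β * (α * (x / S) + β * (y / T)) := by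
    intro x y hx hy
    have hgm := Real.geom_mean_le_arith_mean2_weighted hα hβ
      (div_nonneg hx hS.le) (div_nonneg hy hT.le) hab
    have e : x ^ α * y ^ β = S ^ α * T ^ β * ((x / S) ^ α * (y / T) ^ β) := by
      rw [Real.div_rpow hx hS.le, Real.div_rpow hy hT.le]
      have h1 : S ^ α ≠ 0 := (Real.rpow_pos_of_pos hS α).ne'
      have h2 : T ^ β ≠ 0 := (Real.rpow_pos_of_pos hT β).ne'
      field_simp
    rw [e]
    exact mul_le_mul_of_nonneg_left hgm (by positivity)
  calc w₁ * (x₁ ^ α * y₁ ^ β) + w₂ * (x₂ ^ α * y₂ ^ β)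
      ≤ w₁ * (S ^ α * T ^ β * (α * (x₁ / S) + β * (y₁ / T)))
        + w₂ * (S ^ α * T ^ β * (α * (x₂ / S) + β * (y₂ / T))) :=
        add_le_add (mul_le_mul_of_nonneg_left (main _ _ hx₁ hy₁) hw₁)
          (mul_le_mul_of_nonneg_left (main _ _ hx₂ hy₂) hw₂)
    _ = S ^ α * T ^ β * (α * ((w₁ * x₁ + w₂ * x₂) / S) + β * ((w₁ * y₁ + w₂ * y₂) / T)) := by
        ring
    _ = S ^ α * T ^ β := by
        rw [← hS_def, ← hT_def, div_self hS.ne', div_self hT.ne', mul_one, mul_one, hab, mul_one]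

lemma powerMean_nonneg {α lam a b : ℝ} (h0 : 0 ≤ lam) (h1 : lam ≤ 1) :
    0 ≤ powerMean α lam a b := by
  unfold powerMean
  split_ifs with h h2
  · exact mul_nonneg (Real.rpow_nonneg h.1.le _) (Real.rpow_nonneg h.2.le _)
  · exact Real.rpow_nonneg
      (add_nonneg (mul_nonneg (by linarith) (Real.rpow_nonneg h.1.le _))
        (mul_nonneg h0 (Real.rpow_nonneg h.2.le _))) _
  · exact le_refl 0

lemma powerMean_pos {α lam a b : ℝ} (h0 : 0 < lam) (h1 : lam < 1) (ha : 0 < a) (hb : 0 < b) :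
    0 < powerMean α lam a b := by
  unfold powerMean
  have hc : 0 < a ∧ 0 < b := ⟨ha, hb⟩
  rw [if_pos hc]
  split_ifs with h
  · exact mul_pos (Real.rpow_pos_of_pos ha _) (Real.rpow_pos_of_pos hb _)
  · exact Real.rpow_pos_of_pos
      (add_pos (mul_pos (by linarith) (Real.rpow_pos_of_pos ha _))
        (mul_pos h0 (Real.rpow_pos_of_pos hb _))) _

lemma powerMean_self {α lam a : ℝ} (ha : 0 < a) : powerMean α lam a a = a := by
  unfold powerMean
  have hc : 0 < a ∧ 0 < a := ⟨ha, ha⟩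
  rw [if_pos hc]
  split_ifs with h
  · rw [← Real.rpow_add ha]
    norm_num
  · have e : (1 - lam) * a ^ α + lam * a ^ α = a ^ α := by ring
    rw [e, ← Real.rpow_mul ha.le, mul_one_div_cancel h, Real.rpow_one]

lemma powerMean_le_geom {p lam x y : ℝ} (h0 : 0 < lam) (h1 : lam < 1) (hp : p ≤ 0)
    (hx : 0 < x) (hy : 0 < y) :
    powerMean p lam x y ≤ x ^ (1 - lam) * y ^ lam := by
  unfold powerMean
  have hc : 0 < x ∧ 0 < y := ⟨hx, hy⟩
  rw [if_pos hc]
  split_ifs with h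
  · exact le_refl _
  have hp' : p < 0 := lt_of_le_of_ne hp h
  have hgm := Real.geom_mean_le_arith_mean2_weighted (by linarith : (0:ℝ) ≤ 1 - lam) h0.le
    (Real.rpow_nonneg hx.le p) (Real.rpow_nonneg hy.le p) (by ring)
  have hgmpos : 0 < (x ^ p) ^ (1 - lam) * (y ^ p) ^ lam := by
    have := Real.rpow_pos_of_pos hx p
    have := Real.rpow_pos_of_pos hy p
    positivity
  have h3 := Real.rpow_le_rpow_of_nonpos hgmpos hgm
    (by rw [one_div]; exact inv_nonpos.mpr hp'.le : 1 / p ≤ 0)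
  have e : ((x ^ p) ^ (1 - lam) * (y ^ p) ^ lam) ^ (1 / p) = x ^ (1 - lam) * y ^ lam := by
    rw [Real.mul_rpow (Real.rpow_nonneg (Real.rpow_nonneg hx.le p) _)
        (Real.rpow_nonneg (Real.rpow_nonneg hy.le p) _),
      ← Real.rpow_mul hx.le, ← Real.rpow_mul hy.le,
      ← Real.rpow_mul hx.le, ← Real.rpow_mul hy.le]
    rw [show p * (1 - lam) * (1 / p) = 1 - lam by field_simp,
      show p * lam * (1 / p) = lam by field_simp]
  exact le_trans h3 (le_of_eq e)

/-- The core scalar inequality behind Proposition A.1, for `q ≠ 0`. -/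
lemma core {p q lam A B a b : ℝ} (h0 : 0 < lam) (h1 : lam < 1) (hpq : p ≤ q) (hq : q ≠ 0)
    (hA : 0 < A) (hB : 0 < B) (ha : 0 < a) (hb : 0 < b) :
    powerMean p (lam * B / ((1 - lam) * A + lam * B)) (A ^ (-(1/q)) * a) (B ^ (-(1/q)) * b)
      ≤ ((1 - lam) * A + lam * B) ^ (-(1/q)) * powerMean q lam a b := by
  have h1l : 0 < 1 - lam := by linarith
  have hS : 0 < (1 - lam) * A + lam * B := by positivity
  set S := (1 - lam) * A + lam * B with hS_def
  have haq : 0 < a ^ q := Real.rpow_pos_of_pos ha q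
  have hbq : 0 < b ^ q := Real.rpow_pos_of_pos hb q
  have hU : 0 < (1 - lam) * a ^ q + lam * b ^ q := by positivity
  set U := (1 - lam) * a ^ q + lam * b ^ q with hU_def
  have hμ1 : 1 - lam * B / S = (1 - lam) * A / S := by
    field_simp
    rw [hS_def]; ring
  have hxa : 0 < A ^ (-(1/q)) * a := by positivity
  have hxb : 0 < B ^ (-(1/q)) * b := by positivity
  have hcx : 0 < A ^ (-(1/q)) * a ∧ 0 < B ^ (-(1/q)) * b := ⟨hxa, hxb⟩
  have hcab : 0 < a ∧ 0 < b := ⟨ha, hb⟩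
  unfold powerMean
  rw [if_pos hcx, if_pos hcab, if_neg hq]
  by_cases hp : p = 0
  · subst hp
    rw [if_pos rfl]
    have hq0 : 0 < q := lt_of_le_of_ne (by linarith [hpq]) (Ne.symm hq)
    rw [← Real.rpow_le_rpow_iff (by positivity) (by positivity) hq0]
    have eL : ((A ^ (-(1/q)) * a) ^ (1 - lam * B / S) * (B ^ (-(1/q)) * b) ^ (lam * B / S)) ^ q
        = (a ^ q / A) ^ (1 - lam * B / S) * (b ^ q / B) ^ (lam * B / S) := by
      rw [Real.mul_rpow (Real.rpow_nonneg hxa.le _) (Real.rpow_nonneg hxb.le _),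
        ← Real.rpow_mul hxa.le, ← Real.rpow_mul hxb.le,
        mul_comm (1 - lam * B / S) q, mul_comm (lam * B / S) q,
        Real.rpow_mul hxa.le, Real.rpow_mul hxb.le]
      congr 2
      · rw [Real.mul_rpow (Real.rpow_nonneg hA.le _) ha.le, ← Real.rpow_mul hA.le,
          show -(1/q) * q = -1 by field_simp, Real.rpow_neg_one]
        rw [div_eq_mul_inv, mul_comm]
      · rw [Real.mul_rpow (Real.rpow_nonneg hB.le _) hb.le, ← Real.rpow_mul hB.le,
          show -(1/q) * q = -1 by field_simp, Real.rpow_neg_one]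
        rw [div_eq_mul_inv, mul_comm]
    have eR : (S ^ (-(1/q)) * U ^ (1/q)) ^ q = U / S := by
      rw [Real.mul_rpow (Real.rpow_nonneg hS.le _) (Real.rpow_nonneg hU.le _),
        ← Real.rpow_mul hS.le, ← Real.rpow_mul hU.le,
        show -(1/q) * q = -1 by field_simp, show 1/q * q = 1 by field_simp,
        Real.rpow_neg_one, Real.rpow_one]
      rw [div_eq_mul_inv, mul_comm]
    rw [eL, eR]
    have hw₁ : (0:ℝ) ≤ 1 - lam * B / S := by rw [hμ1]; positivity
    have hw₂ : (0:ℝ) ≤ lam * B / S := by positivity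
    have hgm := Real.geom_mean_le_arith_mean2_weighted (w₁ := 1 - lam * B / S)
      (w₂ := lam * B / S) (p₁ := a ^ q / A) (p₂ := b ^ q / B) hw₁ hw₂
      (le_of_lt (by positivity)) (le_of_lt (by positivity)) (by ring)
    refine le_trans hgm (le_of_eq ?_)
    rw [hμ1]
    field_simp
    ring
  · rw [if_neg hp]
    -- abbreviations
    have hZ1 : 0 < A ^ (1 - p/q) * (a ^ q) ^ (p/q) := by positivity
    have hZ2 : 0 < B ^ (1 - p/q) * (b ^ q) ^ (p/q) := by positivity
    set Z := (1 - lam) * (A ^ (1 - p/q) * (a ^ q) ^ (p/q))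
      + lam * (B ^ (1 - p/q) * (b ^ q) ^ (p/q)) with hZ_def
    have hZ : 0 < Z := by positivity
    have t₁ : (A ^ (-(1/q)) * a) ^ p = (A ^ (1 - p/q) * (a ^ q) ^ (p/q)) / A := by
      rw [eq_div_iff hA.ne', Real.mul_rpow (Real.rpow_nonneg hA.le _) ha.le,
        ← Real.rpow_mul hA.le, ← Real.rpow_mul ha.le,
        show q * (p/q) = p by field_simp,
        show (1 : ℝ) - p/q = -(1/q) * p + 1 by field_simp; ring,
        Real.rpow_add_one hA.ne']
      ring
    have t₂ : (B ^ (-(1/q)) * b) ^ p = (B ^ (1 - p/q) * (b ^ q) ^ (p/q)) / B := by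
      rw [eq_div_iff hB.ne', Real.mul_rpow (Real.rpow_nonneg hB.le _) hb.le,
        ← Real.rpow_mul hB.le, ← Real.rpow_mul hb.le,
        show q * (p/q) = p by field_simp,
        show (1 : ℝ) - p/q = -(1/q) * p + 1 by field_simp; ring,
        Real.rpow_add_one hB.ne']
      ring
    have I1 : (1 - lam * B / S) * (A ^ (-(1/q)) * a) ^ p
        + (lam * B / S) * (B ^ (-(1/q)) * b) ^ p = Z / S := by
      rw [hμ1, t₁, t₂, hZ_def]
      field_simp
    rw [I1]
    have E2 : ((S ^ (1 - p/q) * U ^ (p/q)) / S) ^ (1/p) = S ^ (-(1/q)) * U ^ (1/q) := by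
      have e : (S ^ (1 - p/q) * U ^ (p/q)) / S = S ^ (-(p/q)) * U ^ (p/q) := by
        rw [div_eq_iff hS.ne',
          show (1 : ℝ) - p/q = -(p/q) + 1 by ring, Real.rpow_add_one hS.ne']
        ring
      rw [e, Real.mul_rpow (Real.rpow_nonneg hS.le _) (Real.rpow_nonneg hU.le _),
        ← Real.rpow_mul hS.le, ← Real.rpow_mul hU.le,
        show -(p/q) * (1/p) = -(1/q) by field_simp,
        show (p/q) * (1/p) = 1/q by field_simp]
    rcases lt_or_gt_of_ne hp with hp0 | hp0
    · -- p < 0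
      have hp0' : 1 / p ≤ 0 := by
        rw [one_div]; exact (inv_nonpos).mpr hp0.le
      have claim : S ^ (1 - p/q) * U ^ (p/q) ≤ Z := by
        rcases lt_or_gt_of_ne hq with hq0 | hq0
        · -- q < 0, θ = p/q ≥ 1
          have hθ1 : 1 ≤ p / q := by
            rw [le_div_iff_of_neg hq0]
            linarith
          have hθpos : 0 < p / q := by linarith
          have ht₁ : (A ^ (1 - p/q) * (a ^ q) ^ (p/q)) ^ (1/(p/q)) * A ^ (1 - 1/(p/q))
              = a ^ q := by
            rw [Real.mul_rpow (Real.rpow_nonneg hA.le _) (Real.rpow_nonneg haq.le _),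
              ← Real.rpow_mul hA.le, ← Real.rpow_mul haq.le,
              mul_one_div_cancel hθpos.ne', Real.rpow_one,
              mul_comm (A ^ ((1 - p/q) * (1/(p/q)))) (a ^ q), mul_assoc,
              ← Real.rpow_add hA,
              show (1 - p/q) * (1/(p/q)) + (1 - 1/(p/q)) = 0 by rw [sub_mul, one_mul, mul_one_div_cancel hθpos.ne']; ring,
              Real.rpow_zero, mul_one]
          have ht₂ : (B ^ (1 - p/q) * (b ^ q) ^ (p/q)) ^ (1/(p/q)) * B ^ (1 - 1/(p/q))
              = b ^ q := by
            rw [Real.mul_rpow (Real.rpow_nonneg hB.le _) (Real.rpow_nonneg hbq.le _),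
              ← Real.rpow_mul hB.le, ← Real.rpow_mul hbq.le,
              mul_one_div_cancel hθpos.ne', Real.rpow_one,
              mul_comm (B ^ ((1 - p/q) * (1/(p/q)))) (b ^ q), mul_assoc,
              ← Real.rpow_add hB,
              show (1 - p/q) * (1/(p/q)) + (1 - 1/(p/q)) = 0 by rw [sub_mul, one_mul, mul_one_div_cancel hθpos.ne']; ring,
              Real.rpow_zero, mul_one]
          have H := holder2 h1l.le h0.le hZ1.le hZ2.le hA.le hB.le
            (by positivity : (0:ℝ) ≤ 1/(p/q))
            (by rw [sub_nonneg, div_le_one hθpos]; exact hθ1 : (0:ℝ) ≤ 1 - 1/(p/q))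
            (by ring)
          rw [ht₁, ht₂] at H
          -- H : U ≤ Z ^ (1/(p/q)) * S ^ (1 - 1/(p/q))
          have H2 := Real.rpow_le_rpow hU.le H hθpos.le
          have e2 : (Z ^ (1/(p/q)) * S ^ (1 - 1/(p/q))) ^ (p/q)
              = Z * S ^ (p/q - 1) := by
            rw [Real.mul_rpow (Real.rpow_nonneg hZ.le _) (Real.rpow_nonneg hS.le _),
              ← Real.rpow_mul hZ.le, ← Real.rpow_mul hS.le,
              one_div_mul_cancel hθpos.ne', Real.rpow_one,
              show (1 - 1/(p/q)) * (p/q) = p/q - 1 by rw [sub_mul, one_mul, one_div_mul_cancel hθpos.ne']]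
          rw [e2] at H2
          calc S ^ (1 - p/q) * U ^ (p/q) ≤ S ^ (1 - p/q) * (Z * S ^ (p/q - 1)) :=
                mul_le_mul_of_nonneg_left H2 (Real.rpow_nonneg hS.le _)
            _ = Z * (S ^ (1 - p/q) * S ^ (p/q - 1)) := by ring
            _ = Z := by
                rw [← Real.rpow_add hS, show (1 - p/q) + (p/q - 1) = 0 by ring,
                  Real.rpow_zero, mul_one]
        · -- 0 < q, θ = p/q < 0
          have hθneg : p / q < 0 := div_neg_of_neg_of_pos hp0 hq0
          have h1θ : 0 < 1 - p/q := by linarith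
          have ht₁ : (A ^ (1 - p/q) * (a ^ q) ^ (p/q)) ^ (1/(1 - p/q))
              * (a ^ q) ^ (-(p/q)/(1 - p/q)) = A := by
            rw [Real.mul_rpow (Real.rpow_nonneg hA.le _) (Real.rpow_nonneg haq.le _),
              ← Real.rpow_mul hA.le, ← Real.rpow_mul haq.le,
              mul_one_div_cancel h1θ.ne', Real.rpow_one,
              mul_assoc, ← Real.rpow_add haq,
              show (p/q) * (1/(1 - p/q)) + (-(p/q)/(1 - p/q)) = 0 by rw [neg_div, div_eq_mul_one_div (p/q) (1 - p/q)]; ring,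
              Real.rpow_zero, mul_one]
          have ht₂ : (B ^ (1 - p/q) * (b ^ q) ^ (p/q)) ^ (1/(1 - p/q))
              * (b ^ q) ^ (-(p/q)/(1 - p/q)) = B := by
            rw [Real.mul_rpow (Real.rpow_nonneg hB.le _) (Real.rpow_nonneg hbq.le _),
              ← Real.rpow_mul hB.le, ← Real.rpow_mul hbq.le,
              mul_one_div_cancel h1θ.ne', Real.rpow_one,
              mul_assoc, ← Real.rpow_add hbq,
              show (p/q) * (1/(1 - p/q)) + (-(p/q)/(1 - p/q)) = 0 by rw [neg_div, div_eq_mul_one_div (p/q) (1 - p/q)]; ring,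
              Real.rpow_zero, mul_one]
          have H := holder2 h1l.le h0.le hZ1.le hZ2.le haq.le hbq.le
            (by positivity : (0:ℝ) ≤ 1/(1 - p/q))
            (div_nonneg (le_of_lt (neg_pos.mpr hθneg)) h1θ.le)
            (by rw [← add_div, show 1 + -(p/q) = 1 - p/q by ring, div_self h1θ.ne'])
          rw [ht₁, ht₂] at H
          -- H : S ≤ Z ^ (1/(1-θ)) * U ^ (-θ/(1-θ))
          have H2 := Real.rpow_le_rpow hS.le H h1θ.le
          have e2 : (Z ^ (1/(1 - p/q)) * U ^ (-(p/q)/(1 - p/q))) ^ (1 - p/q)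
              = Z * U ^ (-(p/q)) := by
            rw [Real.mul_rpow (Real.rpow_nonneg hZ.le _) (Real.rpow_nonneg hU.le _),
              ← Real.rpow_mul hZ.le, ← Real.rpow_mul hU.le,
              one_div_mul_cancel h1θ.ne', Real.rpow_one,
              div_mul_cancel₀ _ h1θ.ne']
          rw [e2] at H2
          calc S ^ (1 - p/q) * U ^ (p/q) ≤ (Z * U ^ (-(p/q))) * U ^ (p/q) :=
                mul_le_mul_of_nonneg_right H2 (Real.rpow_nonneg hU.le _)
            _ = Z * (U ^ (-(p/q)) * U ^ (p/q)) := by ring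
            _ = Z := by
                rw [← Real.rpow_add hU, neg_add_cancel, Real.rpow_zero, mul_one]
      -- conclude for p < 0
      have hdiv : (S ^ (1 - p/q) * U ^ (p/q)) / S ≤ Z / S := by
        exact (div_le_div_iff_of_pos_right hS).mpr claim
      have := Real.rpow_le_rpow_of_nonpos (by positivity) hdiv hp0'
      exact le_trans this (le_of_eq E2)
    · -- 0 < p ≤ q, so 0 < q and θ ∈ (0,1]
      have hq0 : 0 < q := lt_of_lt_of_le hp0 hpq
      have hθ0 : 0 ≤ p / q := by positivity
      have hθ1 : 0 ≤ 1 - p / q := by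
        rw [sub_nonneg, div_le_one hq0]; exact hpq
      have H := holder2 h1l.le h0.le hA.le hB.le haq.le hbq.le hθ1 hθ0 (by ring)
      -- H : Z ≤ S ^ (1-θ) * U ^ θ
      have hdiv : Z / S ≤ (S ^ (1 - p/q) * U ^ (p/q)) / S := by
        exact (div_le_div_iff_of_pos_right hS).mpr H
      have := Real.rpow_le_rpow (by positivity) hdiv (by positivity : (0:ℝ) ≤ 1/p)
      exact le_trans this (le_of_eq E2)

end Aux

section KeyH

open Real

lemma key_H {p q ε lam F G a b : ℝ} (h0 : 0 < lam) (h1 : lam < 1) (hpq : p ≤ q) (hε : 0 < ε)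
    (hF : 0 < F) (hG : 0 < G) (ha : 0 ≤ a) (hb : 0 ≤ b) :
    powerMean p (lam * G ^ (ε * q) / ((1 - lam) * F ^ (ε * q) + lam * G ^ (ε * q)))
        (F ^ (-ε) * a) (G ^ (-ε) * b)
      ≤ powerMean (ε * q) lam F G ^ (-ε) * powerMean q lam a b := by
  have hT : 0 < powerMean (ε * q) lam F G := powerMean_pos h0 h1 hF hG
  by_cases hab : 0 < a ∧ 0 < b
  swap
  · have hno : ¬(0 < F ^ (-ε) * a ∧ 0 < G ^ (-ε) * b) := by
      intro ⟨hx, hy⟩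
      exact hab ⟨by nlinarith [Real.rpow_pos_of_pos hF (-ε)], by nlinarith [Real.rpow_pos_of_pos hG (-ε)]⟩
    have lhs0 : powerMean p (lam * G ^ (ε * q) / ((1 - lam) * F ^ (ε * q) + lam * G ^ (ε * q)))
        (F ^ (-ε) * a) (G ^ (-ε) * b) = 0 := by
      rw [powerMean, if_neg hno]
    rw [lhs0]
    exact mul_nonneg (Real.rpow_nonneg hT.le _) (powerMean_nonneg h0.le h1.le)
  obtain ⟨ha', hb'⟩ := hab
  by_cases hq : q = 0
  · subst hq
    have hp0 : p ≤ 0 := hpq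
    rw [mul_zero]
    have e1 : ∀ x : ℝ, x ^ (0:ℝ) = 1 := fun x => Real.rpow_zero x
    rw [e1 F, e1 G]
    have e2 : (1 - lam) * 1 + lam * 1 = 1 := by ring
    rw [e2, mul_one, div_one]
    have eT : powerMean 0 lam F G = F ^ (1 - lam) * G ^ lam := by
      have hc : 0 < F ∧ 0 < G := ⟨hF, hG⟩
      rw [powerMean, if_pos hc, if_pos rfl]
    have eab : powerMean 0 lam a b = a ^ (1 - lam) * b ^ lam := by
      have hc : 0 < a ∧ 0 < b := ⟨ha', hb'⟩
      rw [powerMean, if_pos hc, if_pos rfl]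
    rw [eT, eab]
    have key := powerMean_le_geom (x := F ^ (-ε) * a) (y := G ^ (-ε) * b) h0 h1 hp0
      (mul_pos (Real.rpow_pos_of_pos hF _) ha') (mul_pos (Real.rpow_pos_of_pos hG _) hb')
    refine le_trans key (le_of_eq ?_)
    rw [Real.mul_rpow (Real.rpow_nonneg hF.le _) ha'.le,
      Real.mul_rpow (Real.rpow_nonneg hG.le _) hb'.le,
      Real.mul_rpow (Real.rpow_nonneg hF.le _) (Real.rpow_nonneg hG.le _),
      ← Real.rpow_mul hF.le, ← Real.rpow_mul hG.le,
      ← Real.rpow_mul hF.le, ← Real.rpow_mul hG.le]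
    rw [show (1 - lam) * (-ε) = -ε * (1 - lam) by ring, show lam * (-ε) = -ε * lam by ring]
    ring
  · have hεq : ε * q ≠ 0 := mul_ne_zero hε.ne' hq
    have hFq : 0 < F ^ (ε * q) := Real.rpow_pos_of_pos hF _
    have hGq : 0 < G ^ (ε * q) := Real.rpow_pos_of_pos hG _
    have h1l : 0 < 1 - lam := by linarith
    have hS : 0 < (1 - lam) * F ^ (ε * q) + lam * G ^ (ε * q) := by positivity
    have ec₁ : F ^ (-ε) = (F ^ (ε * q)) ^ (-(1/q)) := by
      rw [← Real.rpow_mul hF.le]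
      congr 1
      field_simp
    have ec₂ : G ^ (-ε) = (G ^ (ε * q)) ^ (-(1/q)) := by
      rw [← Real.rpow_mul hG.le]
      congr 1
      field_simp
    have ech : powerMean (ε * q) lam F G ^ (-ε)
        = ((1 - lam) * F ^ (ε * q) + lam * G ^ (ε * q)) ^ (-(1/q)) := by
      have hc : 0 < F ∧ 0 < G := ⟨hF, hG⟩
      rw [powerMean, if_pos hc, if_neg hεq, ← Real.rpow_mul hS.le]
      congr 1
      field_simp
    rw [ec₁, ec₂, ech]
    exact core h0 h1 hpq hq hFq hGq ha' hb'

end KeyH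

theorem bbl_exponent_monotone
    (n : ℕ) (hn : 1 ≤ n) (p q : ℝ) (hp : -1 / (n : ℝ) < p) (hpq : p ≤ q)
    (hBBL : BBLHolds n p) : BBLHolds n q := by
  classical
  have hn0 : (0:ℝ) < n := by
    have : (1:ℝ) ≤ n := by exact_mod_cast hn
    linarith
  have hq' : -1 / (n : ℝ) < q := lt_of_lt_of_le hp hpq
  have hnq : (0:ℝ) < 1 + n * q := by
    rw [div_lt_iff₀ hn0] at hq'
    nlinarith
  intro lam hlam f g h hf hg hh hif hig hih hyp
  obtain ⟨hl0, hl1⟩ := hlam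
  have h1l : 0 < 1 - lam := by linarith
  by_cases hFG : 0 < (∫ x, f x) ∧ 0 < (∫ x, g x)
  swap
  · rw [powerMean, if_neg hFG]
    exact integral_nonneg hh
  obtain ⟨hF, hG⟩ := hFG
  set F := ∫ x, f x with hF_def
  set G := ∫ x, g x with hG_def
  set ε : ℝ := 1 / (1 + n * q) with hε_def
  have hε : 0 < ε := by positivity
  have hε1 : ε * (1 + n * q) = 1 := by
    rw [hε_def]
    field_simp
  have hqq' : q / (1 + (n:ℝ) * q) = ε * q := by
    rw [hε_def]
    ring
  rw [hqq']
  set T := powerMean (ε * q) lam F G with hT_def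
  have hT : 0 < T := powerMean_pos hl0 hl1 hF hG
  have hFq : 0 < F ^ (ε * q) := Real.rpow_pos_of_pos hF _
  have hGq : 0 < G ^ (ε * q) := Real.rpow_pos_of_pos hG _
  set S := (1 - lam) * F ^ (ε * q) + lam * G ^ (ε * q) with hS_def
  have hS : 0 < S := by positivity
  set μ := lam * G ^ (ε * q) / S with hμ_def
  have hμ0 : 0 < μ := by positivity
  have hμ1 : μ < 1 := by
    rw [hμ_def, div_lt_one hS, hS_def]
    nlinarith
  set ρ₁ := F ^ (ε * q) / S with hρ₁_def
  set ρ₂ := G ^ (ε * q) / S with hρ₂_def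
  have hρ₁ : 0 < ρ₁ := by positivity
  have hρ₂ : 0 < ρ₂ := by positivity
  have h1μρ : 1 - μ = (1 - lam) * ρ₁ := by
    rw [hμ_def, hρ₁_def]
    field_simp
    rw [hS_def]
    ring
  have hμρ : μ = lam * ρ₂ := by
    rw [hμ_def, hρ₂_def]
    ring
  -- the rescaled functions
  set f' : EuclideanSpace ℝ (Fin n) → ℝ := fun y => F ^ (-ε) * f (ρ₁ • y) with hf'_def
  set g' : EuclideanSpace ℝ (Fin n) → ℝ := fun z => G ^ (-ε) * g (ρ₂ • z) with hg'_def
  set h' : EuclideanSpace ℝ (Fin n) → ℝ := fun x => T ^ (-ε) * h x with hh'_def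
  -- quasi measure preserving transfer
  have m₁ : Measurable (fun y : EuclideanSpace ℝ (Fin n) => ρ₁ • y) :=
    measurable_const_smul ρ₁
  have m₂ : Measurable (fun z : EuclideanSpace ℝ (Fin n) => ρ₂ • z) :=
    measurable_const_smul ρ₂
  have hQMP : Measure.QuasiMeasurePreserving
      (fun yz : EuclideanSpace ℝ (Fin n) × EuclideanSpace ℝ (Fin n) =>
        ((ρ₁ • yz.1, ρ₂ • yz.2) : EuclideanSpace ℝ (Fin n) × EuclideanSpace ℝ (Fin n)))
      volume volume := by
    refine ⟨(m₁.comp measurable_fst).prodMk (m₂.comp measurable_snd), ?_⟩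
    have hPm : (fun yz : EuclideanSpace ℝ (Fin n) × EuclideanSpace ℝ (Fin n) =>
        ((ρ₁ • yz.1, ρ₂ • yz.2) : EuclideanSpace ℝ (Fin n) × EuclideanSpace ℝ (Fin n)))
        = Prod.map (fun y : EuclideanSpace ℝ (Fin n) => ρ₁ • y)
          (fun z : EuclideanSpace ℝ (Fin n) => ρ₂ • z) := rfl
    rw [hPm, Measure.volume_eq_prod, ← Measure.map_prod_map _ _ m₁ m₂,
      Measure.map_addHaar_smul volume hρ₁.ne', Measure.map_addHaar_smul volume hρ₂.ne']
    exact Measure.AbsolutelyContinuous.prod Measure.smul_absolutelyContinuous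
      Measure.smul_absolutelyContinuous
  have hyp2 := hQMP.ae hyp
  have hyp' : ∀ᵐ yz ∂(volume : Measure (EuclideanSpace ℝ (Fin n) × EuclideanSpace ℝ (Fin n))),
      powerMean p μ (f' yz.1) (g' yz.2) ≤ h' ((1 - μ) • yz.1 + μ • yz.2) := by
    filter_upwards [hyp2] with yz hyz
    have hcomb : ((1 - μ) • yz.1 + μ • yz.2 : EuclideanSpace ℝ (Fin n))
        = (1 - lam) • (ρ₁ • yz.1) + lam • (ρ₂ • yz.2) := by
      rw [smul_smul, smul_smul, ← h1μρ, ← hμρ]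
    have step1 : powerMean p μ (f' yz.1) (g' yz.2)
        ≤ T ^ (-ε) * powerMean q lam (f (ρ₁ • yz.1)) (g (ρ₂ • yz.2)) := by
      rw [hf'_def, hg'_def, hT_def, hμ_def, hS_def]
      exact key_H hl0 hl1 hpq hε hF hG (hf _) (hg _)
    refine le_trans step1 ?_
    rw [hh'_def, hcomb]
    exact mul_le_mul_of_nonneg_left hyz (Real.rpow_nonneg hT.le _)
  -- integrability
  have hif' : Integrable f' := (hif.comp_smul hρ₁.ne').const_mul _
  have hig' : Integrable g' := (hig.comp_smul hρ₂.ne').const_mul _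
  have hih' : Integrable h' := hih.const_mul _
  -- apply the p-BBL
  have happ := hBBL μ ⟨hμ0, hμ1⟩ f' g' h'
    (fun x => mul_nonneg (Real.rpow_nonneg hF.le _) (hf _))
    (fun x => mul_nonneg (Real.rpow_nonneg hG.le _) (hg _))
    (fun x => mul_nonneg (Real.rpow_nonneg hT.le _) (hh _))
    hif' hig' hih' hyp'
  -- compute the integrals
  have hint_h' : (∫ x, h' x) = T ^ (-ε) * ∫ x, h x := by
    rw [hh'_def]
    exact integral_const_mul _ _
  have key_exp : ∀ (X : ℝ), 0 < X → X ^ (-ε) * ((X ^ (ε * q) / S) ^ (n:ℕ))⁻¹ * X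
      = T ^ ((n:ℝ) * (ε * q)) := by
    intro X hX
    by_cases hq0 : q = 0
    · subst hq0
      have hε0 : ε = 1 := by
        rw [hε_def]; norm_num
      have hSe : S = 1 := by
        rw [hS_def]
        simp
      rw [hε0, hSe]
      simp [Real.rpow_neg_one, inv_mul_cancel₀ hX.ne']
    · have hεq : ε * q ≠ 0 := mul_ne_zero hε.ne' hq0
      have hXq : 0 < X ^ (ε * q) := Real.rpow_pos_of_pos hX _
      have hTS : T = S ^ (1 / (ε * q)) := by
        rw [hT_def, powerMean, if_pos (⟨hF, hG⟩ : 0 < F ∧ 0 < G), if_neg hεq, hS_def]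
      have eT : T ^ ((n:ℝ) * (ε * q)) = S ^ (n:ℝ) := by
        rw [hTS, ← Real.rpow_mul hS.le]
        congr 1
        field_simp
      rw [eT]
      have epow : ((X ^ (ε * q) / S) ^ (n:ℕ)) = X ^ (ε * q * n) / S ^ (n:ℝ) := by
        rw [div_pow, ← Real.rpow_natCast (X ^ (ε * q)) n, ← Real.rpow_mul hX.le,
          ← Real.rpow_natCast S n]
      rw [epow]
      rw [inv_div]
      have hSn : 0 < S ^ (n:ℝ) := Real.rpow_pos_of_pos hS _
      have hXn : 0 < X ^ (ε * q * n) := Real.rpow_pos_of_pos hX _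
      rw [div_eq_mul_inv, ← mul_assoc, ← Real.rpow_neg hX.le]
      calc X ^ (-ε) * S ^ (n:ℝ) * X ^ (-(ε * q * (n:ℝ))) * X
          = S ^ (n:ℝ) * (X ^ (-ε) * X ^ (-(ε * q * (n:ℝ))) * X ^ (1:ℝ)) := by
            rw [Real.rpow_one]; ring
        _ = S ^ (n:ℝ) * X ^ (-ε + -(ε * q * (n:ℝ)) + 1) := by
            rw [← Real.rpow_add hX, ← Real.rpow_add hX]
        _ = S ^ (n:ℝ) := by
            rw [show -ε + -(ε * q * (n:ℝ)) + 1 = 1 - ε * (1 + n * q) by ring, hε1]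
            norm_num
  have hint_f' : (∫ x, f' x) = T ^ ((n:ℝ) * (ε * q)) := by
    rw [hf'_def, integral_const_mul,
      Measure.integral_comp_smul_of_nonneg volume f ρ₁ (hR := hρ₁.le),
      finrank_euclideanSpace_fin, smul_eq_mul, hρ₁_def, ← mul_assoc]
    exact key_exp F hF
  have hint_g' : (∫ x, g' x) = T ^ ((n:ℝ) * (ε * q)) := by
    rw [hg'_def, integral_const_mul,
      Measure.integral_comp_smul_of_nonneg volume g ρ₂ (hR := hρ₂.le),
      finrank_euclideanSpace_fin, smul_eq_mul, hρ₂_def, ← mul_assoc]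
    exact key_exp G hG
  rw [hint_f', hint_g', hint_h'] at happ
  rw [powerMean_self (Real.rpow_pos_of_pos hT _)] at happ
  -- conclude
  have hTε : 0 < T ^ ε := Real.rpow_pos_of_pos hT _
  calc T = T ^ ((n:ℝ) * (ε * q)) * T ^ ε := by
        rw [← Real.rpow_add hT, show (n:ℝ) * (ε * q) + ε = ε * (1 + n * q) by ring, hε1,
          Real.rpow_one]
    _ ≤ (T ^ (-ε) * ∫ x, h x) * T ^ ε := mul_le_mul_of_nonneg_right happ hTε.le
    _ = (∫ x, h x) * (T ^ (-ε) * T ^ ε) := by ring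
    _ = ∫ x, h x := by
        rw [← Real.rpow_add hT, neg_add_cancel, Real.rpow_zero, mul_one]
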